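/- arXiv:1708.06838 — 3 statements merged into one kernel-verified Lean document; each statement's English description precedes it below -/
import Mathlib

section
/- Let μ be a σ-finite measure on a measurable space X, let M > 0, and let p, q : X → [0,∞) be measurable functions with ∫ p dμ = ∫ q dμ = 1, with p ≤ M and q ≤ M μ-almost everywhere, with q > 0 μ-a.e. on {p > 0}, and such that x ↦ p(x)·log(p(x)/q(x)) is μ-integrable. Then ∫ p·log(p/q) dμ ≥ (1/(4M)) · ∫ (p − q)² dμ. -/
open MeasureTheory

/-- **Kullback–Leibler dominates the squared L₂ distance for bounded densities**
(combined lower bound used in the proof of Lemma 2 of the paper). For probability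
densities `p, q` bounded by `M` a.e., with `q > 0` a.e. on `{p > 0}` and `p·log(p/q)`
integrable, `∫ p·log(p/q) dμ ≥ (1/(4M)) · ∫ (p − q)² dμ`. -/
theorem KL_ge_squared_L2_of_bounded
    {X : Type*} [MeasurableSpace X] (μ : Measure X) [SigmaFinite μ]
    (M : ℝ) (hM : 0 < M)
    (p q : X → ℝ) (hpm : Measurable p) (hqm : Measurable q)
    (hp0 : ∀ x, 0 ≤ p x) (hq0 : ∀ x, 0 ≤ q x)
    (hpM : ∀ᵐ x ∂μ, p x ≤ M) (hqM : ∀ᵐ x ∂μ, q x ≤ M)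
    (hpint : Integrable p μ) (hqint : Integrable q μ)
    (hp1 : ∫ x, p x ∂μ = 1) (hq1 : ∫ x, q x ∂μ = 1)
    (hqpos : ∀ᵐ x ∂μ, 0 < p x → 0 < q x)
    (hlogint : Integrable (fun x => p x * Real.log (p x / q x)) μ) :
    (1 / (4 * M)) * ∫ x, (p x - q x) ^ 2 ∂μ
      ≤ ∫ x, p x * Real.log (p x / q x) ∂μ := by
  set s : X → ℝ := fun x => Real.sqrt (p x * q x) with hs
  have hsmeas : Measurable s := (hpm.mul hqm).sqrt
  have hsint : Integrable s μ := by
    refine Integrable.mono' ((hpint.add hqint).const_mul (1/2)) hsmeas.aestronglyMeasurable ?_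
    filter_upwards with x
    simp only [Pi.add_apply]
    have h1 := Real.sq_sqrt (hp0 x)
    have h2 := Real.sq_sqrt (hq0 x)
    have h3 : s x = Real.sqrt (p x) * Real.sqrt (q x) := Real.sqrt_mul (hp0 x) _
    have h4 := Real.sqrt_nonneg (p x)
    have h5 := Real.sqrt_nonneg (q x)
    rw [Real.norm_eq_abs, abs_of_nonneg (Real.sqrt_nonneg _)]
    nlinarith [sq_nonneg (Real.sqrt (p x) - Real.sqrt (q x))]
  -- pointwise lower bound: 2p - 2s ≤ p log(p/q), a.e.
  have hptwise : ∀ᵐ x ∂μ, 2 * p x - 2 * s x ≤ p x * Real.log (p x / q x) := by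
    filter_upwards [hqpos] with x hq
    rcases eq_or_lt_of_le (hp0 x) with hp | hp
    · simp [← hp, hs, Real.sqrt_eq_zero']
    · have hqx := hq hp
      have hsub : Real.log (Real.sqrt (q x / p x)) ≤ Real.sqrt (q x / p x) - 1 :=
        Real.log_le_sub_one_of_pos (Real.sqrt_pos.2 (by positivity))
      have hlogsqrt : Real.log (Real.sqrt (q x / p x)) = (1/2) * Real.log (q x / p x) := by
        rw [Real.log_sqrt (by positivity)]; ring
      have hloginv : Real.log (q x / p x) = - Real.log (p x / q x) := by
        rw [← Real.log_inv, inv_div]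
      have hsq : Real.sqrt (q x / p x) = s x / p x := by
        rw [hs, show q x / p x = (p x * q x) / (p x)^2 by field_simp,
          Real.sqrt_div (by positivity), Real.sqrt_sq hp.le]
      rw [hlogsqrt, hsq] at hsub
      have h9 : 2 - 2 * (s x / p x) ≤ Real.log (p x / q x) := by
        rw [hloginv] at hsub; linarith
      have h10 := mul_le_mul_of_nonneg_left h9 hp.le
      have h11 : p x * (2 - 2 * (s x / p x)) = 2 * p x - 2 * s x := by
        field_simp
      linarith [h11 ▸ h10]
  have hLint : Integrable (fun x => 2 * p x - 2 * s x) μ :=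
    (hpint.const_mul 2).sub (hsint.const_mul 2)
  have hI1 : ∫ x, (2 * p x - 2 * s x) ∂μ ≤ ∫ x, p x * Real.log (p x / q x) ∂μ :=
    integral_mono_ae hLint hlogint hptwise
  have hIeq : ∫ x, (2 * p x - 2 * s x) ∂μ = 2 - 2 * ∫ x, s x ∂μ := by
    rw [integral_sub (hpint.const_mul 2) (hsint.const_mul 2), integral_const_mul,
      integral_const_mul, hp1]
    ring
  have hHint : Integrable (fun x => p x + q x - 2 * s x) μ :=
    (hpint.add hqint).sub (hsint.const_mul 2)
  have hHeq : ∫ x, (p x + q x - 2 * s x) ∂μ = 2 - 2 * ∫ x, s x ∂μ := by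
    have : (fun x => p x + q x - 2 * s x) = fun x => p x + (q x - 2 * s x) := by
      funext x; ring
    have hg : Integrable (fun x => q x - 2 * s x) μ := hqint.sub (hsint.const_mul 2)
    rw [this, integral_add hpint hg, integral_sub hqint (hsint.const_mul 2),
      integral_const_mul, hp1, hq1]
    ring
  have hpt2 : ∀ᵐ x ∂μ, (p x - q x)^2 ≤ 4 * M * (p x + q x - 2 * s x) := by
    filter_upwards [hpM, hqM] with x hpMx hqMx
    have h3 : s x = Real.sqrt (p x) * Real.sqrt (q x) := Real.sqrt_mul (hp0 x) _
    have h1 := Real.sq_sqrt (hp0 x)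
    have h2 := Real.sq_sqrt (hq0 x)
    have h4 := Real.sqrt_nonneg (p x)
    have h5 := Real.sqrt_nonneg (q x)
    have h6 : Real.sqrt (p x) ≤ Real.sqrt M := Real.sqrt_le_sqrt hpMx
    have h7 : Real.sqrt (q x) ≤ Real.sqrt M := Real.sqrt_le_sqrt hqMx
    have h8 := Real.sq_sqrt hM.le
    nlinarith [sq_nonneg (Real.sqrt (p x) - Real.sqrt (q x)),
      sq_nonneg (Real.sqrt (p x) + Real.sqrt (q x)), Real.sqrt_nonneg M]
  have hsqint : Integrable (fun x => (p x - q x)^2) μ := by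
    refine Integrable.mono' (hHint.const_mul (4 * M)) ((hpm.sub hqm).pow_const 2).aestronglyMeasurable ?_
    filter_upwards [hpt2] with x hx
    rw [Real.norm_eq_abs, abs_of_nonneg (sq_nonneg _)]; exact hx
  have hI2 : ∫ x, (p x - q x)^2 ∂μ ≤ (4 * M) * ∫ x, (p x + q x - 2 * s x) ∂μ := by
    rw [← integral_const_mul]
    exact integral_mono_ae hsqint (hHint.const_mul (4 * M)) hpt2
  rw [one_div, inv_mul_le_iff₀ (by positivity)]
  calc ∫ x, (p x - q x)^2 ∂μ ≤ (4 * M) * (2 - 2 * ∫ x, s x ∂μ) := by rw [← hHeq]; exact hI2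
    _ = (4 * M) * ∫ x, (2 * p x - 2 * s x) ∂μ := by rw [hIeq]
    _ ≤ (4 * M) * ∫ x, p x * Real.log (p x / q x) ∂μ :=
        mul_le_mul_of_nonneg_left hI1 (by positivity)
end

section
/- Let τ > 0 and 0 ≤ q < τ. Let f₀ : [0,τ] → ℝ be a measurable function with f₀(t) ≥ c₁ for all t ∈ [0,τ], where c₁ > 0, and with ∫_0^τ f₀(t) dt ≤ 1. Then for every measurable function g : [q,τ] → ℝ, one has ∫_q^τ ( ∫_q^t g(u) du )² f₀(t) dt ≤ (τ/c₁) · ∫_q^τ g(u)² f₀(u) du (both sides interpreted in [0,∞]). -/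
open MeasureTheory

-- Cauchy–Schwarz for lintegrals: (∫⁻ f)² ≤ (∫⁻ f²) * μ(univ)
lemma cs_lintegral {α : Type*} [MeasurableSpace α] (μ : Measure α)
    {f : α → ENNReal} (hf : AEMeasurable f μ) :
    (∫⁻ x, f x ∂μ) ^ 2 ≤ (∫⁻ x, f x ^ 2 ∂μ) * μ Set.univ := by
  have hpq : (2:ℝ).HolderConjugate 2 := by
    constructor <;> norm_num
  have h := ENNReal.lintegral_mul_le_Lp_mul_Lq μ hpq hf (aemeasurable_const (b := (1:ENNReal)))
  simp only [Pi.mul_apply, mul_one, ENNReal.one_rpow, lintegral_const] at h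
  have hconv : ∀ x : ENNReal, x ^ (2:ℝ) = x ^ (2:ℕ) := fun x => by
    rw [← ENNReal.rpow_natCast x 2]; norm_num
  simp only [hconv, one_mul] at h
  have hsq : ∀ x : ENNReal, (x ^ (1/(2:ℝ))) ^ (2:ℕ) = x := fun x => by
    rw [← ENNReal.rpow_natCast (x ^ (1/(2:ℝ))) 2, ← ENNReal.rpow_mul]
    norm_num
  have h2 := pow_le_pow_left' h 2
  refine h2.trans (le_of_eq ?_)
  rw [mul_pow, hsq, hsq]

/-- **Core analytic inequality in the derivation of (formula2) in the proof of Lemma 2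
of the paper.** If `f₀ ≥ c₁ > 0` on `[0,τ]` with `∫_0^τ f₀ ≤ 1`, then for every
measurable `g`, `∫_q^τ (∫_q^t g(u) du)² f₀(t) dt ≤ (τ/c₁) · ∫_q^τ g(u)² f₀(u) du`,
both sides interpreted in `[0,∞]`. -/
theorem second_moment_increment_bound
    (τ q c₁ : ℝ) (hτ : 0 < τ) (hq : 0 ≤ q) (hqτ : q < τ) (hc₁ : 0 < c₁)
    (f₀ : ℝ → ℝ) (hf₀m : Measurable f₀)
    (hf₀low : ∀ t ∈ Set.Icc (0:ℝ) τ, c₁ ≤ f₀ t)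
    (hf₀int : ∫⁻ t in Set.Ioc (0:ℝ) τ, ENNReal.ofReal (f₀ t) ∂(volume : Measure ℝ) ≤ 1)
    (g : ℝ → ℝ) (hg : Measurable g) :
    ∫⁻ t in Set.Ioc q τ, ENNReal.ofReal ((∫ u in q..t, g u) ^ 2 * f₀ t) ∂(volume : Measure ℝ)
      ≤ ENNReal.ofReal (τ / c₁)
        * ∫⁻ u in Set.Ioc q τ, ENNReal.ofReal (g u ^ 2 * f₀ u) ∂(volume : Measure ℝ) := by
  set I := ∫⁻ u in Set.Ioc q τ, ENNReal.ofReal (g u ^ 2 * f₀ u) ∂(volume : Measure ℝ) with hI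
  -- step 1: pointwise bound on the inner integral
  have key : ∀ t ∈ Set.Ioc q τ,
      ENNReal.ofReal ((∫ u in q..t, g u) ^ 2)
        ≤ ENNReal.ofReal τ * ENNReal.ofReal c₁⁻¹ * I := by
    intro t ht
    obtain ⟨hqt, htτ⟩ := ht
    by_cases hint : IntervalIntegrable g volume q t
    · have habs : |∫ u in q..t, g u| ≤ ∫ u in Set.Ioc q t, |g u| := by
        rw [intervalIntegral.integral_of_le hqt.le]
        simpa [Real.norm_eq_abs] using
          norm_integral_le_integral_norm (μ := volume.restrict (Set.Ioc q t)) g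
      have hgi : IntegrableOn g (Set.Ioc q t) volume := hint.1
      have h0 : ENNReal.ofReal ((∫ u in q..t, g u) ^ 2)
          ≤ ENNReal.ofReal ((∫ u in Set.Ioc q t, |g u|) ^ 2) := by
        apply ENNReal.ofReal_le_ofReal
        rw [← sq_abs]
        exact pow_le_pow_left₀ (abs_nonneg _) habs 2
      have h1 : ENNReal.ofReal ((∫ u in Set.Ioc q t, |g u|) ^ 2)
          = (∫⁻ u in Set.Ioc q t, ENNReal.ofReal |g u|) ^ 2 := by
        rw [ENNReal.ofReal_pow (integral_nonneg fun u => abs_nonneg _)]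
        congr 1
        rw [ofReal_integral_eq_lintegral_ofReal hgi.abs
          (Filter.Eventually.of_forall fun u => abs_nonneg _)]
      have h2 : (∫⁻ u in Set.Ioc q t, ENNReal.ofReal |g u|) ^ 2
          ≤ (∫⁻ u in Set.Ioc q t, ENNReal.ofReal (g u ^ 2)) * (volume (Set.Ioc q t)) := by
        have := cs_lintegral (volume.restrict (Set.Ioc q t))
          (f := fun u => ENNReal.ofReal |g u|)
          ((hg.abs.ennreal_ofReal).aemeasurable)
        simp only [Measure.restrict_apply_univ] at this
        refine this.trans (le_of_eq ?_)
        congr 1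
        refine lintegral_congr fun u => ?_
        rw [← ENNReal.ofReal_pow (abs_nonneg _), sq_abs]
      -- bound g² ≤ c₁⁻¹ * (g² f₀) on Ioc q t
      have h3 : (∫⁻ u in Set.Ioc q t, ENNReal.ofReal (g u ^ 2))
          ≤ ENNReal.ofReal c₁⁻¹ * ∫⁻ u in Set.Ioc q t, ENNReal.ofReal (g u ^ 2 * f₀ u) := by
        rw [← lintegral_const_mul' _ _ ENNReal.ofReal_ne_top]
        refine setLIntegral_mono
          (measurable_const.mul (((hg.pow_const 2).mul hf₀m).ennreal_ofReal)) fun u hu => ?_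
        have huI : u ∈ Set.Icc (0:ℝ) τ := ⟨hq.trans hu.1.le, hu.2.trans htτ⟩
        have hf := hf₀low u huI
        rw [← ENNReal.ofReal_mul (by positivity)]
        apply ENNReal.ofReal_le_ofReal
        rw [← mul_assoc]
        calc g u ^ 2 = (c₁⁻¹ * c₁) * g u ^ 2 := by
              rw [inv_mul_cancel₀ hc₁.ne', one_mul]
          _ ≤ (c₁⁻¹ * f₀ u) * g u ^ 2 := by
              apply mul_le_mul_of_nonneg_right _ (sq_nonneg _)
              exact mul_le_mul_of_nonneg_left hf (by positivity)
          _ = c₁⁻¹ * g u ^ 2 * f₀ u := by ring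
      have h4 : (∫⁻ u in Set.Ioc q t, ENNReal.ofReal (g u ^ 2 * f₀ u)) ≤ I := by
        exact lintegral_mono_set (Set.Ioc_subset_Ioc_right htτ)
      have h5 : volume (Set.Ioc q t) ≤ ENNReal.ofReal τ := by
        rw [Real.volume_Ioc]
        exact ENNReal.ofReal_le_ofReal (by linarith)
      calc ENNReal.ofReal ((∫ u in q..t, g u) ^ 2)
          ≤ (∫⁻ u in Set.Ioc q t, ENNReal.ofReal (g u ^ 2)) * volume (Set.Ioc q t) := by
            rw [← h1] at h2; exact h0.trans h2
        _ ≤ (ENNReal.ofReal c₁⁻¹ * I) * ENNReal.ofReal τ := by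
            exact mul_le_mul' (h3.trans (mul_le_mul_right h4 _)) h5
        _ = ENNReal.ofReal τ * ENNReal.ofReal c₁⁻¹ * I := by ring
    · rw [intervalIntegral.integral_undef hint]
      simp
  -- step 2: integrate the pointwise bound
  have hsub : (∫⁻ t in Set.Ioc q τ, ENNReal.ofReal (f₀ t) ∂(volume : Measure ℝ)) ≤ 1 := by
    refine le_trans (lintegral_mono_set ?_) hf₀int
    exact Set.Ioc_subset_Ioc_left hq
  calc ∫⁻ t in Set.Ioc q τ, ENNReal.ofReal ((∫ u in q..t, g u) ^ 2 * f₀ t)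
      ≤ ∫⁻ t in Set.Ioc q τ,
          (ENNReal.ofReal τ * ENNReal.ofReal c₁⁻¹ * I) * ENNReal.ofReal (f₀ t) := by
        refine setLIntegral_mono
          (measurable_const.mul hf₀m.ennreal_ofReal) fun t ht => ?_
        have hfnn : 0 ≤ f₀ t :=
          le_trans hc₁.le (hf₀low t ⟨le_trans hq ht.1.le, ht.2⟩)
        rw [ENNReal.ofReal_mul (sq_nonneg _)]
        exact mul_le_mul' (key t ht) le_rfl
    _ = (ENNReal.ofReal τ * ENNReal.ofReal c₁⁻¹ * I)
          * ∫⁻ t in Set.Ioc q τ, ENNReal.ofReal (f₀ t) := by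
        rw [lintegral_const_mul'' _ (hf₀m.ennreal_ofReal.aemeasurable)]
    _ ≤ (ENNReal.ofReal τ * ENNReal.ofReal c₁⁻¹ * I) * 1 := by
        exact mul_le_mul_right hsub _
    _ = ENNReal.ofReal (τ / c₁) * I := by
        rw [mul_one, div_eq_mul_inv, ENNReal.ofReal_mul hτ.le]
end

section
/- Fix constants 0 < a ≤ b, τ > 0, η > 0, c₀ > 0, z₀ > 0 and a dimension d ≥ 1. For β ∈ ℝ^d with |β| ≤ c₀ and a measurable function λ : [0,τ] → [a,b], write Λ(t) = ∫_0^t λ(u) du, and for an observation x = (t,u,v,q,z,δ₁,δ₂,δ₃) define l(β,λ;x) = δ₁·log( exp[−e^{β'z}(Λ(u)−Λ(q))] − exp[−e^{β'z}(Λ(v)−Λ(q))] ) + δ₂·[ −e^{β'z}(Λ(v)−Λ(q)) ] + δ₃·[ −e^{β'z}(Λ(t)−Λ(q)) + β'z + log λ(t) ], where δ₁,δ₂,δ₃ ∈ {0,1} with δ₁+δ₂+δ₃ = 1, |z| ≤ z₀, 0 ≤ q ≤ min(t,u,v), t,u,v ∈ [0,τ], and v − u ≥ η whenever δ₁ = 1.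 Then there exists a constant C, depending only on a, b, τ, η, c₀, z₀ and d, such that for all pairs (β₁,λ₁), (β₂,λ₂) satisfying these constraints and all admissible observations x, |l(β₁,λ₁;x) − l(β₂,λ₂;x)| ≤ C·( |β₁−β₂| + sup_{s∈[0,τ]} |λ₁(s)−λ₂(s)| ). -/
open MeasureTheory

/-- The baseline cumulative hazard `Λ(t) = ∫_0^t λ(u) du`. -/
noncomputable def cumHaz (lam : ℝ → ℝ) (t : ℝ) : ℝ := ∫ u in (0:ℝ)..t, lam u

lemma abs_exp_sub_exp_le {x y c : ℝ} (hx : x ≤ c) (hy : y ≤ c) :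
    |Real.exp x - Real.exp y| ≤ Real.exp c * |x - y| := by
  wlog h : y ≤ x generalizing x y
  · rw [abs_sub_comm, abs_sub_comm x y]; exact this hy hx (le_of_not_ge h)
  rw [abs_of_nonneg (sub_nonneg.2 (Real.exp_le_exp.2 h)), abs_of_nonneg (sub_nonneg.2 h)]
  have h1 : Real.exp x - Real.exp y ≤ Real.exp x * (x - y) := by
    have h2 : Real.exp y = Real.exp x * Real.exp (y - x) := by
      rw [← Real.exp_add]; ring_nf
    have h3 := Real.add_one_le_exp (y - x)
    nlinarith [Real.exp_pos x]
  calc Real.exp x - Real.exp y ≤ Real.exp x * (x - y) := h1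
    _ ≤ Real.exp c * (x - y) :=
        mul_le_mul_of_nonneg_right (Real.exp_le_exp.2 hx) (sub_nonneg.2 h)

lemma abs_log_sub_log_le {x y a : ℝ} (ha : 0 < a) (hx : a ≤ x) (hy : a ≤ y) :
    |Real.log x - Real.log y| ≤ |x - y| / a := by
  wlog h : y ≤ x generalizing x y
  · rw [abs_sub_comm, abs_sub_comm x y]; exact this hy hx (le_of_not_ge h)
  have hx0 : 0 < x := lt_of_lt_of_le ha hx
  have hy0 : 0 < y := lt_of_lt_of_le ha hy
  rw [abs_of_nonneg (sub_nonneg.2 ((Real.log_le_log_iff hy0 hx0).2 h)),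
    abs_of_nonneg (sub_nonneg.2 h)]
  have h1 : Real.log x - Real.log y = Real.log (x / y) := (Real.log_div hx0.ne' hy0.ne').symm
  rw [h1]
  have h2 : Real.log (x / y) ≤ x / y - 1 := Real.log_le_sub_one_of_pos (div_pos hx0 hy0)
  have h3 : x / y - 1 = (x - y) / y := by field_simp
  rw [h3] at h2
  exact h2.trans (div_le_div_of_nonneg_left (sub_nonneg.2 h) ha hy)

lemma intInt_of_bdd {f : ℝ → ℝ} (hf : Measurable f) {c q t : ℝ}
    (hqt : q ≤ t) (h : ∀ s ∈ Set.Ioc q t, |f s| ≤ c) :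
    IntervalIntegrable f volume q t := by
  apply IntervalIntegrable.mono_fun' (g := fun _ => c) intervalIntegrable_const
    hf.aestronglyMeasurable
  filter_upwards [MeasureTheory.self_mem_ae_restrict measurableSet_uIoc] with x hx
  rw [Set.uIoc_of_le hqt] at hx
  exact h x hx

lemma intInt_lam {lam : ℝ → ℝ} (hm : Measurable lam) {a b τ x y : ℝ} (ha : 0 < a)
    (hb : ∀ s ∈ Set.Icc (0:ℝ) τ, lam s ∈ Set.Icc a b)
    (hx : 0 ≤ x) (hxy : x ≤ y) (hyτ : y ≤ τ) : IntervalIntegrable lam volume x y := by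
  refine intInt_of_bdd hm hxy (c := b) (fun s hs => ?_)
  have hs' := hb s ⟨hx.trans hs.1.le, hs.2.trans hyτ⟩
  rw [abs_of_nonneg (le_trans ha.le hs'.1)]; exact hs'.2

lemma cumHaz_sub {lam : ℝ → ℝ} (hm : Measurable lam) {a b τ q t : ℝ} (ha : 0 < a)
    (hb : ∀ s ∈ Set.Icc (0:ℝ) τ, lam s ∈ Set.Icc a b)
    (hq : 0 ≤ q) (hqt : q ≤ t) (htτ : t ≤ τ) :
    cumHaz lam t - cumHaz lam q = ∫ s in q..t, lam s := by
  have h1 := intervalIntegral.integral_add_adjacent_intervals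
    (intInt_lam hm ha hb le_rfl hq (hqt.trans htτ))
    (intInt_lam hm ha hb hq hqt htτ)
  unfold cumHaz
  linarith [h1]

lemma cumHaz_sub_bounds {lam : ℝ → ℝ} (hm : Measurable lam) {a b τ q t : ℝ} (ha : 0 < a)
    (hb : ∀ s ∈ Set.Icc (0:ℝ) τ, lam s ∈ Set.Icc a b)
    (hq : 0 ≤ q) (hqt : q ≤ t) (htτ : t ≤ τ) :
    a * (t - q) ≤ cumHaz lam t - cumHaz lam q ∧
      cumHaz lam t - cumHaz lam q ≤ b * (t - q) := by
  rw [cumHaz_sub hm ha hb hq hqt htτ]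
  have hint := intInt_lam hm ha hb hq hqt htτ
  constructor
  · have := intervalIntegral.integral_mono_on hqt (intervalIntegrable_const (c := a)) hint
      (fun s hs => (hb s ⟨hq.trans hs.1, hs.2.trans htτ⟩).1)
    simpa [mul_comm] using this
  · have := intervalIntegral.integral_mono_on hqt hint (intervalIntegrable_const (c := b))
      (fun s hs => (hb s ⟨hq.trans hs.1, hs.2.trans htτ⟩).2)
    simpa [mul_comm] using this

lemma cumHaz_diff {lam₁ lam₂ : ℝ → ℝ} (hm₁ : Measurable lam₁) (hm₂ : Measurable lam₂)
    {a b τ q t M : ℝ} (ha : 0 < a)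
    (hb₁ : ∀ s ∈ Set.Icc (0:ℝ) τ, lam₁ s ∈ Set.Icc a b)
    (hb₂ : ∀ s ∈ Set.Icc (0:ℝ) τ, lam₂ s ∈ Set.Icc a b)
    (hM : ∀ s ∈ Set.Icc (0:ℝ) τ, |lam₁ s - lam₂ s| ≤ M) (hM0 : 0 ≤ M)
    (hq : 0 ≤ q) (hqt : q ≤ t) (htτ : t ≤ τ) :
    |(cumHaz lam₁ t - cumHaz lam₁ q) - (cumHaz lam₂ t - cumHaz lam₂ q)| ≤ τ * M := by
  rw [cumHaz_sub hm₁ ha hb₁ hq hqt htτ, cumHaz_sub hm₂ ha hb₂ hq hqt htτ,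
    ← intervalIntegral.integral_sub (intInt_lam hm₁ ha hb₁ hq hqt htτ)
      (intInt_lam hm₂ ha hb₂ hq hqt htτ)]
  have h := intervalIntegral.norm_integral_le_of_norm_le_const
    (f := fun s => lam₁ s - lam₂ s) (C := M) (a := q) (b := t) ?_
  · rw [Real.norm_eq_abs] at h
    refine h.trans ?_
    rw [abs_of_nonneg (sub_nonneg.2 hqt)]
    nlinarith
  · intro x hx
    rw [Set.uIoc_of_le hqt] at hx
    rw [Real.norm_eq_abs]
    exact hM x ⟨hq.trans hx.1.le, hx.2.trans htτ⟩

/-- The log-likelihood contribution `l(β,λ;x)` of a single observation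
`x = (t,u,v,q,z,δ₁,δ₂,δ₃)` under the non-mixture Cox cure model
`S(t|z) = exp(−e^{β'z} Λ(t))` with left truncation at `q`. -/
noncomputable def cureLoglik {d : ℕ} (β : EuclideanSpace ℝ (Fin d)) (lam : ℝ → ℝ)
    (t u v q : ℝ) (z : EuclideanSpace ℝ (Fin d)) (δ₁ δ₂ δ₃ : ℝ) : ℝ :=
  δ₁ * Real.log
      (Real.exp (-(Real.exp (inner ℝ β z : ℝ) * (cumHaz lam u - cumHaz lam q)))
        - Real.exp (-(Real.exp (inner ℝ β z : ℝ) * (cumHaz lam v - cumHaz lam q))))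
  + δ₂ * (-(Real.exp (inner ℝ β z : ℝ) * (cumHaz lam v - cumHaz lam q)))
  + δ₃ * (-(Real.exp (inner ℝ β z : ℝ) * (cumHaz lam t - cumHaz lam q))
        + (inner ℝ β z : ℝ) + Real.log (lam t))

set_option maxHeartbeats 8000000

/-- **Uniform Lipschitz property of the cure-model log-likelihood** (the analytic content
behind the bracketing-number bound for the class `𝔏` in the proof of Theorem 1 of the
paper): there is a constant `C`, depending only on `a, b, τ, η, c₀, z₀, d`, such that
`|l(β₁,λ₁;x) − l(β₂,λ₂;x)| ≤ C·(|β₁−β₂| + sup_{s∈[0,τ]} |λ₁(s)−λ₂(s)|)` over all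
admissible parameters and observations. -/
theorem cureLoglik_lipschitz
    (d : ℕ) (hd : 1 ≤ d) (a b τ η c₀ z₀ : ℝ)
    (ha : 0 < a) (hab : a ≤ b) (hτ : 0 < τ) (hη : 0 < η) (hc₀ : 0 < c₀) (hz₀ : 0 < z₀) :
    ∃ C : ℝ, ∀ (β₁ β₂ : EuclideanSpace ℝ (Fin d)) (lam₁ lam₂ : ℝ → ℝ)
      (t u v q : ℝ) (z : EuclideanSpace ℝ (Fin d)) (δ₁ δ₂ δ₃ : ℝ),
      ‖β₁‖ ≤ c₀ → ‖β₂‖ ≤ c₀ →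
      Measurable lam₁ → Measurable lam₂ →
      (∀ s ∈ Set.Icc (0:ℝ) τ, lam₁ s ∈ Set.Icc a b) →
      (∀ s ∈ Set.Icc (0:ℝ) τ, lam₂ s ∈ Set.Icc a b) →
      (δ₁ = 0 ∨ δ₁ = 1) → (δ₂ = 0 ∨ δ₂ = 1) → (δ₃ = 0 ∨ δ₃ = 1) →
      δ₁ + δ₂ + δ₃ = 1 →
      ‖z‖ ≤ z₀ →
      t ∈ Set.Icc (0:ℝ) τ → u ∈ Set.Icc (0:ℝ) τ → v ∈ Set.Icc (0:ℝ) τ →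
      0 ≤ q → q ≤ t → q ≤ u → q ≤ v →
      (δ₁ = 1 → η ≤ v - u) →
      |cureLoglik β₁ lam₁ t u v q z δ₁ δ₂ δ₃ - cureLoglik β₂ lam₂ t u v q z δ₁ δ₂ δ₃|
        ≤ C * (‖β₁ - β₂‖ + ⨆ s ∈ Set.Icc (0:ℝ) τ, |lam₁ s - lam₂ s|) := by
  have hb0 : 0 < b := lt_of_lt_of_le ha hab
  obtain ⟨E, hEdef⟩ : ∃ x : ℝ, x = Real.exp (c₀ * z₀) := ⟨_, rfl⟩
  have hEpos : 0 < E := hEdef ▸ Real.exp_pos _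
  obtain ⟨K, hKdef⟩ : ∃ x : ℝ, x = E * τ + E * z₀ * (b * τ) := ⟨_, rfl⟩
  have hKpos : 0 < K := by rw [hKdef]; positivity
  obtain ⟨r, hrdef⟩ : ∃ x : ℝ, x = Real.exp (-(c₀ * z₀)) * (a * η) := ⟨_, rfl⟩
  have hrpos : 0 < r := by rw [hrdef]; positivity
  obtain ⟨m, hmdef⟩ : ∃ x : ℝ, x = Real.exp (-(E * (b * τ))) * (1 - Real.exp (-r)) := ⟨_, rfl⟩
  have hmpos : 0 < m := by
    rw [hmdef]
    apply mul_pos (Real.exp_pos _)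
    have : Real.exp (-r) < 1 := Real.exp_lt_one_iff.2 (by linarith)
    linarith
  refine ⟨2 * K / m + K + z₀ + 1 / a, ?_⟩
  intro β₁ β₂ lam₁ lam₂ t u v q z δ₁ δ₂ δ₃ hβ₁ hβ₂ hm₁ hm₂ hb₁ hb₂ hδ₁ hδ₂ hδ₃ hsum
    hz ht hu hv hq hqt hqu hqv hηuv
  -- the sup and its basic properties
  obtain ⟨M, hMdef⟩ : ∃ x : ℝ, x = ⨆ s ∈ Set.Icc (0:ℝ) τ, |lam₁ s - lam₂ s| := ⟨_, rfl⟩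
  rw [← hMdef]
  have hbdd : BddAbove (Set.range fun s => ⨆ (_ : s ∈ Set.Icc (0:ℝ) τ), |lam₁ s - lam₂ s|) := by
    refine ⟨b - a, ?_⟩
    rintro x ⟨s, rfl⟩
    beta_reduce
    by_cases h : s ∈ Set.Icc (0:ℝ) τ
    · rw [ciSup_pos h]
      have h1 := hb₁ s h; have h2 := hb₂ s h
      rw [abs_le]; constructor <;> [linarith [h1.1, h2.2]; linarith [h1.2, h2.1]]
    · rw [ciSup_neg h, Real.sSup_empty]; linarith
  have hM0 : 0 ≤ M := hMdef ▸ Real.iSup_nonneg fun s => Real.iSup_nonneg fun _ => abs_nonneg _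
  have hMle : ∀ s ∈ Set.Icc (0:ℝ) τ, |lam₁ s - lam₂ s| ≤ M := by
    intro s hs
    have := le_ciSup hbdd s
    rw [ciSup_pos hs] at this
    exact hMdef ▸ this
  have hD0 : 0 ≤ ‖β₁ - β₂‖ + M := add_nonneg (norm_nonneg _) hM0
  -- inner product estimates
  have habs₁ : |(inner ℝ β₁ z : ℝ)| ≤ c₀ * z₀ :=
    (abs_real_inner_le_norm β₁ z).trans (mul_le_mul hβ₁ hz (norm_nonneg z) hc₀.le)
  have habs₂ : |(inner ℝ β₂ z : ℝ)| ≤ c₀ * z₀ :=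
    (abs_real_inner_le_norm β₂ z).trans (mul_le_mul hβ₂ hz (norm_nonneg z) hc₀.le)
  have hidiff : |(inner ℝ β₁ z : ℝ) - (inner ℝ β₂ z : ℝ)| ≤ z₀ * ‖β₁ - β₂‖ := by
    rw [← inner_sub_left]
    calc |(inner ℝ (β₁ - β₂) z : ℝ)| ≤ ‖β₁ - β₂‖ * ‖z‖ := abs_real_inner_le_norm _ _
      _ ≤ z₀ * ‖β₁ - β₂‖ := by nlinarith [norm_nonneg (β₁ - β₂), norm_nonneg z]
  have he₁ : Real.exp (inner ℝ β₁ z : ℝ) ≤ E := by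
    rw [hEdef]; exact Real.exp_le_exp.2 ((le_abs_self _).trans habs₁)
  have he₂ : Real.exp (inner ℝ β₂ z : ℝ) ≤ E := by
    rw [hEdef]; exact Real.exp_le_exp.2 ((le_abs_self _).trans habs₂)
  have he₁' : Real.exp (-(c₀ * z₀)) ≤ Real.exp (inner ℝ β₁ z : ℝ) :=
    Real.exp_le_exp.2 ((abs_le.1 habs₁).1)
  have he₂' : Real.exp (-(c₀ * z₀)) ≤ Real.exp (inner ℝ β₂ z : ℝ) :=
    Real.exp_le_exp.2 ((abs_le.1 habs₂).1)
  have hediff : |Real.exp (inner ℝ β₁ z : ℝ) - Real.exp (inner ℝ β₂ z : ℝ)|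
      ≤ E * (z₀ * ‖β₁ - β₂‖) := by
    refine (abs_exp_sub_exp_le ((le_abs_self _).trans habs₁)
      ((le_abs_self _).trans habs₂)).trans ?_
    rw [← hEdef]
    exact mul_le_mul_of_nonneg_left hidiff hEpos.le
  -- cumulative hazard bounds
  have hΛ : ∀ (lam : ℝ → ℝ), Measurable lam →
      (∀ s ∈ Set.Icc (0:ℝ) τ, lam s ∈ Set.Icc a b) →
      ∀ s, q ≤ s → s ≤ τ →
      0 ≤ cumHaz lam s - cumHaz lam q ∧ cumHaz lam s - cumHaz lam q ≤ b * τ := by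
    intro lam hm hb' s h1 h2
    obtain ⟨hl, hr'⟩ := cumHaz_sub_bounds hm ha hb' hq h1 h2
    constructor
    · nlinarith
    · nlinarith
  have hΛd : ∀ s, q ≤ s → s ≤ τ →
      |(cumHaz lam₁ s - cumHaz lam₁ q) - (cumHaz lam₂ s - cumHaz lam₂ q)| ≤ τ * M :=
    fun s h1 h2 => cumHaz_diff hm₁ hm₂ ha hb₁ hb₂ hMle hM0 hq h1 h2
  -- difference of the A-terms
  have hA : ∀ s, q ≤ s → s ≤ τ →
      |Real.exp (inner ℝ β₁ z : ℝ) * (cumHaz lam₁ s - cumHaz lam₁ q)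
        - Real.exp (inner ℝ β₂ z : ℝ) * (cumHaz lam₂ s - cumHaz lam₂ q)|
        ≤ K * (‖β₁ - β₂‖ + M) := by
    intro s h1 h2
    obtain ⟨hd0, hdb⟩ := hΛ lam₂ hm₂ hb₂ s h1 h2
    have hdd := hΛd s h1 h2
    have key : Real.exp (inner ℝ β₁ z : ℝ) * (cumHaz lam₁ s - cumHaz lam₁ q)
        - Real.exp (inner ℝ β₂ z : ℝ) * (cumHaz lam₂ s - cumHaz lam₂ q)
        = Real.exp (inner ℝ β₁ z : ℝ)
            * ((cumHaz lam₁ s - cumHaz lam₁ q) - (cumHaz lam₂ s - cumHaz lam₂ q))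
          + (Real.exp (inner ℝ β₁ z : ℝ) - Real.exp (inner ℝ β₂ z : ℝ))
            * (cumHaz lam₂ s - cumHaz lam₂ q) := by ring
    rw [key]
    refine (abs_add_le _ _).trans ?_
    rw [abs_mul, abs_mul, abs_of_pos (Real.exp_pos _), abs_of_nonneg hd0]
    have t1 : Real.exp (inner ℝ β₁ z : ℝ)
        * |(cumHaz lam₁ s - cumHaz lam₁ q) - (cumHaz lam₂ s - cumHaz lam₂ q)|
        ≤ E * (τ * M) :=
      mul_le_mul he₁ hdd (abs_nonneg _) hEpos.le
    have t2 : |Real.exp (inner ℝ β₁ z : ℝ) - Real.exp (inner ℝ β₂ z : ℝ)|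
        * (cumHaz lam₂ s - cumHaz lam₂ q)
        ≤ (E * (z₀ * ‖β₁ - β₂‖)) * (b * τ) :=
      mul_le_mul hediff hdb hd0 (by positivity)
    have hnn : (0:ℝ) ≤ ‖β₁ - β₂‖ := norm_nonneg _
    rw [hKdef]
    nlinarith [mul_nonneg (mul_nonneg hEpos.le hτ.le) hnn,
      mul_nonneg (mul_nonneg (mul_nonneg hEpos.le hz₀.le) (mul_nonneg hb0.le hτ.le)) hM0]
  -- case split on the indicator
  rcases hδ₁ with h1 | h1 <;> rcases hδ₂ with h2 | h2 <;> rcases hδ₃ with h3 | h3 <;>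
    subst h1 <;> subst h2 <;> subst h3 <;> try norm_num at hsum
  -- case δ₃ = 1
  · simp only [cureLoglik, zero_mul, one_mul, zero_add, add_zero]
    have hAt := hA t hqt ht.2
    have hlog : |Real.log (lam₁ t) - Real.log (lam₂ t)| ≤ M / a := by
      refine (abs_log_sub_log_le ha (hb₁ t ht).1 (hb₂ t ht).1).trans ?_
      exact (div_le_div_iff_of_pos_right ha).2 (hMle t ht)
    have key : (-(Real.exp (inner ℝ β₁ z : ℝ) * (cumHaz lam₁ t - cumHaz lam₁ q))
          + (inner ℝ β₁ z : ℝ) + Real.log (lam₁ t))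
        - (-(Real.exp (inner ℝ β₂ z : ℝ) * (cumHaz lam₂ t - cumHaz lam₂ q))
          + (inner ℝ β₂ z : ℝ) + Real.log (lam₂ t))
        = -(Real.exp (inner ℝ β₁ z : ℝ) * (cumHaz lam₁ t - cumHaz lam₁ q)
            - Real.exp (inner ℝ β₂ z : ℝ) * (cumHaz lam₂ t - cumHaz lam₂ q))
          + (((inner ℝ β₁ z : ℝ) - (inner ℝ β₂ z : ℝ))
            + (Real.log (lam₁ t) - Real.log (lam₂ t))) := by ring
    rw [key]
    have step : |(-(Real.exp (inner ℝ β₁ z : ℝ) * (cumHaz lam₁ t - cumHaz lam₁ q)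
            - Real.exp (inner ℝ β₂ z : ℝ) * (cumHaz lam₂ t - cumHaz lam₂ q)))
          + (((inner ℝ β₁ z : ℝ) - (inner ℝ β₂ z : ℝ))
            + (Real.log (lam₁ t) - Real.log (lam₂ t)))|
        ≤ K * (‖β₁ - β₂‖ + M) + (z₀ * ‖β₁ - β₂‖ + M / a) := by
      refine (abs_add_le _ _).trans ?_
      rw [abs_neg]
      exact add_le_add hAt ((abs_add_le _ _).trans (add_le_add hidiff hlog))
    refine step.trans ?_
    have c1 : 0 ≤ 2 * K / m * (‖β₁ - β₂‖ + M) :=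
      mul_nonneg (div_nonneg (by linarith) hmpos.le) hD0
    have c2 : z₀ * ‖β₁ - β₂‖ ≤ z₀ * (‖β₁ - β₂‖ + M) := by nlinarith
    have c3 : M / a ≤ 1 / a * (‖β₁ - β₂‖ + M) := by
      rw [div_eq_mul_inv, one_div]
      have : M ≤ ‖β₁ - β₂‖ + M := le_add_of_nonneg_left (norm_nonneg _)
      nlinarith [inv_pos.2 ha]
    nlinarith [mul_nonneg hKpos.le hM0, norm_nonneg (β₁ - β₂)]
  -- case δ₂ = 1
  · simp only [cureLoglik, zero_mul, one_mul, zero_add, add_zero]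
    have hAv := hA v hqv hv.2
    have key : -(Real.exp (inner ℝ β₁ z : ℝ) * (cumHaz lam₁ v - cumHaz lam₁ q))
        - -(Real.exp (inner ℝ β₂ z : ℝ) * (cumHaz lam₂ v - cumHaz lam₂ q))
        = -(Real.exp (inner ℝ β₁ z : ℝ) * (cumHaz lam₁ v - cumHaz lam₁ q)
          - Real.exp (inner ℝ β₂ z : ℝ) * (cumHaz lam₂ v - cumHaz lam₂ q)) := by ring
    rw [key, abs_neg]
    refine hAv.trans ?_
    nlinarith [mul_nonneg (div_nonneg (by linarith) hmpos.le : (0:ℝ) ≤ 2 * K / m) hD0,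
      mul_nonneg hz₀.le hD0, mul_nonneg (by positivity : (0:ℝ) ≤ 1 / a) hD0]
  -- case δ₁ = 1
  · simp only [cureLoglik, zero_mul, one_mul, zero_add, add_zero]
    have huv : u ≤ v := by linarith [hηuv rfl]
    -- bounds on the A-terms
    have hAb : ∀ (β' : EuclideanSpace ℝ (Fin d)) (lam : ℝ → ℝ), ‖β'‖ ≤ c₀ → Measurable lam →
        (∀ s ∈ Set.Icc (0:ℝ) τ, lam s ∈ Set.Icc a b) → ∀ w, q ≤ w → w ≤ τ →
        0 ≤ Real.exp (inner ℝ β' z : ℝ) * (cumHaz lam w - cumHaz lam q) ∧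
        Real.exp (inner ℝ β' z : ℝ) * (cumHaz lam w - cumHaz lam q) ≤ E * (b * τ) := by
      intro β' lam hβ' hm hb' w h1 h2
      obtain ⟨hc1, hc2⟩ := hΛ lam hm hb' w h1 h2
      have he : Real.exp (inner ℝ β' z : ℝ) ≤ E := by
        rw [hEdef]
        exact Real.exp_le_exp.2 ((le_abs_self _).trans ((abs_real_inner_le_norm β' z).trans
          (mul_le_mul hβ' hz (norm_nonneg z) hc₀.le)))
      exact ⟨mul_nonneg (Real.exp_pos _).le hc1, mul_le_mul he hc2 hc1 hEpos.le⟩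
    have hgap : ∀ (β' : EuclideanSpace ℝ (Fin d)) (lam : ℝ → ℝ), ‖β'‖ ≤ c₀ → Measurable lam →
        (∀ s ∈ Set.Icc (0:ℝ) τ, lam s ∈ Set.Icc a b) →
        r ≤ Real.exp (inner ℝ β' z : ℝ) * (cumHaz lam v - cumHaz lam q)
          - Real.exp (inner ℝ β' z : ℝ) * (cumHaz lam u - cumHaz lam q) := by
      intro β' lam hβ' hm hb'
      have h1 := (cumHaz_sub_bounds hm ha hb' hu.1 huv hv.2).1
      have he' : Real.exp (-(c₀ * z₀)) ≤ Real.exp (inner ℝ β' z : ℝ) :=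
        Real.exp_le_exp.2 ((abs_le.1 ((abs_real_inner_le_norm β' z).trans
          (mul_le_mul hβ' hz (norm_nonneg z) hc₀.le))).1)
      have key : Real.exp (inner ℝ β' z : ℝ) * (cumHaz lam v - cumHaz lam q)
          - Real.exp (inner ℝ β' z : ℝ) * (cumHaz lam u - cumHaz lam q)
          = Real.exp (inner ℝ β' z : ℝ) * (cumHaz lam v - cumHaz lam u) := by ring
      rw [key, hrdef]
      have haη : a * η ≤ cumHaz lam v - cumHaz lam u :=
        (mul_le_mul_of_nonneg_left (hηuv rfl) ha.le).trans h1
      calc Real.exp (-(c₀ * z₀)) * (a * η)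
          ≤ Real.exp (inner ℝ β' z : ℝ) * (a * η) :=
            mul_le_mul_of_nonneg_right he' (mul_nonneg ha.le hη.le)
        _ ≤ Real.exp (inner ℝ β' z : ℝ) * (cumHaz lam v - cumHaz lam u) :=
            mul_le_mul_of_nonneg_left haη (Real.exp_pos _).le
    -- lower bound for the log argument
    have hg_lb : ∀ Au Av : ℝ, 0 ≤ Au → Au ≤ E * (b * τ) → r ≤ Av - Au →
        m ≤ Real.exp (-Au) - Real.exp (-Av) := by
      intro Au Av h0 hub hr'
      have hsplit : Real.exp (-Av) = Real.exp (-Au) * Real.exp (-(Av - Au)) := by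
        rw [← Real.exp_add]; ring_nf
      rw [hsplit, hmdef]
      have e1 : Real.exp (-(E * (b * τ))) ≤ Real.exp (-Au) := Real.exp_le_exp.2 (by linarith)
      have e2 : Real.exp (-(Av - Au)) ≤ Real.exp (-r) := Real.exp_le_exp.2 (by linarith)
      have e3 : Real.exp (-r) < 1 := Real.exp_lt_one_iff.2 (by linarith)
      nlinarith [Real.exp_pos (-Au), Real.exp_pos (-(Av - Au)),
        mul_le_mul e1 (by linarith : 1 - Real.exp (-r) ≤ 1 - Real.exp (-(Av - Au)))
          (by linarith) (Real.exp_pos (-Au)).le]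
    obtain ⟨h1u0, h1ub⟩ := hAb β₁ lam₁ hβ₁ hm₁ hb₁ u hqu hu.2
    obtain ⟨h2u0, h2ub⟩ := hAb β₂ lam₂ hβ₂ hm₂ hb₂ u hqu hu.2
    obtain ⟨h1v0, h1vb⟩ := hAb β₁ lam₁ hβ₁ hm₁ hb₁ v hqv hv.2
    obtain ⟨h2v0, h2vb⟩ := hAb β₂ lam₂ hβ₂ hm₂ hb₂ v hqv hv.2
    have hg1 : m ≤ Real.exp (-(Real.exp (inner ℝ β₁ z : ℝ) * (cumHaz lam₁ u - cumHaz lam₁ q)))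
        - Real.exp (-(Real.exp (inner ℝ β₁ z : ℝ) * (cumHaz lam₁ v - cumHaz lam₁ q))) :=
      hg_lb _ _ h1u0 h1ub (by linarith [hgap β₁ lam₁ hβ₁ hm₁ hb₁])
    have hg2 : m ≤ Real.exp (-(Real.exp (inner ℝ β₂ z : ℝ) * (cumHaz lam₂ u - cumHaz lam₂ q)))
        - Real.exp (-(Real.exp (inner ℝ β₂ z : ℝ) * (cumHaz lam₂ v - cumHaz lam₂ q))) :=
      hg_lb _ _ h2u0 h2ub (by linarith [hgap β₂ lam₂ hβ₂ hm₂ hb₂])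
    -- 1-Lipschitz bound for exp on nonpositive arguments
    have hexp : ∀ x y : ℝ, 0 ≤ x → 0 ≤ y →
        |Real.exp (-x) - Real.exp (-y)| ≤ |x - y| := by
      intro x y hx hy
      have := abs_exp_sub_exp_le (c := 0) (neg_nonpos.2 hx) (neg_nonpos.2 hy)
      rw [Real.exp_zero, one_mul] at this
      refine this.trans ?_
      rw [show -x - -y = -(x - y) by ring, abs_neg]
    have hAu := hA u hqu hu.2
    have hAv := hA v hqv hv.2
    have hgdiff : |(Real.exp (-(Real.exp (inner ℝ β₁ z : ℝ) * (cumHaz lam₁ u - cumHaz lam₁ q)))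
          - Real.exp (-(Real.exp (inner ℝ β₁ z : ℝ) * (cumHaz lam₁ v - cumHaz lam₁ q))))
        - (Real.exp (-(Real.exp (inner ℝ β₂ z : ℝ) * (cumHaz lam₂ u - cumHaz lam₂ q)))
          - Real.exp (-(Real.exp (inner ℝ β₂ z : ℝ) * (cumHaz lam₂ v - cumHaz lam₂ q))))|
        ≤ 2 * K * (‖β₁ - β₂‖ + M) := by
      have t1 := (hexp _ _ h1u0 h2u0).trans hAu
      have t2 := (hexp _ _ h1v0 h2v0).trans hAv
      have keyg : (Real.exp (-(Real.exp (inner ℝ β₁ z : ℝ) * (cumHaz lam₁ u - cumHaz lam₁ q)))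
            - Real.exp (-(Real.exp (inner ℝ β₁ z : ℝ) * (cumHaz lam₁ v - cumHaz lam₁ q))))
          - (Real.exp (-(Real.exp (inner ℝ β₂ z : ℝ) * (cumHaz lam₂ u - cumHaz lam₂ q)))
            - Real.exp (-(Real.exp (inner ℝ β₂ z : ℝ) * (cumHaz lam₂ v - cumHaz lam₂ q))))
          = (Real.exp (-(Real.exp (inner ℝ β₁ z : ℝ) * (cumHaz lam₁ u - cumHaz lam₁ q)))
            - Real.exp (-(Real.exp (inner ℝ β₂ z : ℝ) * (cumHaz lam₂ u - cumHaz lam₂ q))))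
          - (Real.exp (-(Real.exp (inner ℝ β₁ z : ℝ) * (cumHaz lam₁ v - cumHaz lam₁ q)))
            - Real.exp (-(Real.exp (inner ℝ β₂ z : ℝ) * (cumHaz lam₂ v - cumHaz lam₂ q)))) := by
        ring
      rw [keyg]
      refine (abs_sub _ _).trans ?_
      linarith
    have hfin := (abs_log_sub_log_le hmpos hg1 hg2).trans
      ((div_le_div_iff_of_pos_right hmpos).2 hgdiff)
    refine hfin.trans ?_
    have heq : 2 * K * (‖β₁ - β₂‖ + M) / m = 2 * K / m * (‖β₁ - β₂‖ + M) := by ring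
    rw [heq]
    nlinarith [mul_nonneg hKpos.le hD0, mul_nonneg hz₀.le hD0,
      mul_nonneg (by positivity : (0:ℝ) ≤ 1 / a) hD0]
end
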